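/- arXiv:1408.6333 — 2 statements merged into one kernel-verified Lean document; each statement's English description precedes it below -/
import Mathlib

section
/- With the notation of the previous statement (design matrix $X_n$ built from distinct reals $x_1, \dots, x_n$, $v_n = (d+1)\sum_j x_j^2$, $\widetilde{S}_n^2 = \frac{1}{n}\sum_j (x_j - \bar{x}_n)^2 > 0$), the smallest eigenvalue $\lambda_2^{(n)} = \frac{n+v_n}{2} - \sqrt{\frac{(n+v_n)^2}{4} - n^2(d+1)\widetilde{S}_n^2}$ of $X_n^\top X_n$ satisfies the lower bound $\lambda_2^{(n)} \ge \frac{n}{1/\widetilde{S}_n^2 + 1 + \bar{x}_n^2/\widetilde{S}_n^2}$. -/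
lemma aux_stmt3 (nr c S2 xb : ℝ) (hn : 0 < nr) (hc : 1 ≤ c) (hS : 0 < S2) :
    nr / (1 / S2 + 1 + xb ^ 2 / S2) ≤
      (nr + c * nr * (S2 + xb ^ 2)) / 2 -
        Real.sqrt ((nr + c * nr * (S2 + xb ^ 2)) ^ 2 / 4 - nr ^ 2 * c * S2) := by
  set A := nr + c * nr * (S2 + xb ^ 2) with hAdef
  set B := nr ^ 2 * c * S2 with hBdef
  have hc0 : 0 < c := lt_of_lt_of_le one_pos hc
  have hA : 0 < A := by
    have : 0 ≤ c * nr * (S2 + xb ^ 2) := by positivity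
    linarith
  have hB : 0 < B := by positivity
  have hAB : 4 * B ≤ A ^ 2 := by
    nlinarith [sq_nonneg (nr - c * nr * (S2 + xb ^ 2)), sq_nonneg xb,
      mul_nonneg (mul_nonneg (mul_nonneg hn.le hn.le) hc0.le) (sq_nonneg xb)]
  have h1 : 0 ≤ A / 2 - B / A := by
    rw [sub_nonneg, div_le_div_iff₀ hA (by norm_num : (0:ℝ) < 2)]
    nlinarith
  have h2 : A ^ 2 / 4 - B ≤ (A / 2 - B / A) ^ 2 := by
    have hne : A ≠ 0 := ne_of_gt hA
    have key : (A / 2 - B / A) ^ 2 - (A ^ 2 / 4 - B) = (B / A) ^ 2 := by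
      field_simp
      ring
    nlinarith [sq_nonneg (B / A)]
  have hsqrt : Real.sqrt (A ^ 2 / 4 - B) ≤ A / 2 - B / A := by
    calc Real.sqrt (A ^ 2 / 4 - B) ≤ Real.sqrt ((A / 2 - B / A) ^ 2) :=
          Real.sqrt_le_sqrt h2
      _ = A / 2 - B / A := Real.sqrt_sq h1
  have hL : nr / (1 / S2 + 1 + xb ^ 2 / S2) ≤ B / A := by
    have hd : 0 < 1 / S2 + 1 + xb ^ 2 / S2 := by positivity
    rw [div_le_div_iff₀ hd hA]
    have e1 : nr * A = nr ^ 2 * (1 + c * (S2 + xb ^ 2)) := by rw [hAdef]; ring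
    have e2 : B * (1 / S2 + 1 + xb ^ 2 / S2) = nr ^ 2 * (c + c * S2 + c * xb ^ 2) := by
      rw [hBdef]; field_simp
    rw [e1, e2]
    nlinarith [sq_nonneg xb, sq_nonneg nr]
  linarith

theorem stmt_3 (d n : ℕ) (hn : 2 ≤ n) (x : Fin n → ℝ)
    (hx : Function.Injective x) :
    (0 : ℝ) < (∑ j, (x j - (∑ i, x i) / n) ^ 2) / n ∧
    ∀ v xbar S2 : ℝ,
      v = (d + 1 : ℝ) * ∑ j, x j ^ 2 →
      xbar = (∑ j, x j) / n →
      S2 = (∑ j, (x j - (∑ i, x i) / n) ^ 2) / n →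
      (n : ℝ) / (1 / S2 + 1 + xbar ^ 2 / S2) ≤
        ((n : ℝ) + v) / 2 -
          Real.sqrt (((n : ℝ) + v) ^ 2 / 4 - (n : ℝ) ^ 2 * (d + 1 : ℝ) * S2) := by
  have hn0 : (0 : ℝ) < n := by
    have : 0 < n := by omega
    exact_mod_cast this
  have hnne : (n : ℝ) ≠ 0 := ne_of_gt hn0
  set s : ℝ := ∑ i, x i with hs
  set m : ℝ := s / n with hm
  -- positivity of the sum
  have hTpos : 0 < ∑ j, (x j - m) ^ 2 := by
    have hne : x ⟨0, by omega⟩ ≠ x ⟨1, by omega⟩ := by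
      intro h
      have := hx h
      simp [Fin.ext_iff] at this
    have hj : ∃ j, x j ≠ m := by
      by_contra h
      push_neg at h
      exact hne ((h _).trans (h _).symm)
    obtain ⟨j, hj⟩ := hj
    have hterm : 0 < (x j - m) ^ 2 := by
      have : x j - m ≠ 0 := sub_ne_zero.mpr hj
      positivity
    exact Finset.sum_pos' (fun i _ => sq_nonneg _) ⟨j, Finset.mem_univ j, hterm⟩
  have hS2pos : (0 : ℝ) < (∑ j, (x j - (∑ i, x i) / n) ^ 2) / n := by
    exact div_pos hTpos hn0
  refine ⟨hS2pos, ?_⟩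
  intro v xbar S2 hv hxb hS2
  -- key identity: ∑ x j ^2 = n * S2 + n * xbar ^ 2
  have hexp : ∀ j : Fin n, (x j - m) ^ 2 = x j ^ 2 - 2 * m * x j + m ^ 2 := fun j => by ring
  have hT : ∑ j, (x j - m) ^ 2 = (∑ j, x j ^ 2) - 2 * m * s + (n : ℝ) * m ^ 2 := by
    rw [Finset.sum_congr rfl fun j _ => hexp j]
    rw [Finset.sum_add_distrib, Finset.sum_sub_distrib, ← Finset.mul_sum, Finset.sum_const,
      Finset.card_univ, Fintype.card_fin, nsmul_eq_mul]
  have hms : 2 * m * s = 2 * (n : ℝ) * m ^ 2 := by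
    rw [hm]; field_simp
  have hQ : ∑ j, x j ^ 2 = (n : ℝ) * S2 + (n : ℝ) * xbar ^ 2 := by
    rw [hS2, hxb]
    have : S2 = (∑ j, (x j - m) ^ 2) / n := hS2
    rw [hT, hms]
    field_simp
    ring
  have hveq : v = ((d : ℝ) + 1) * (n : ℝ) * (S2 + xbar ^ 2) := by
    rw [hv, hQ]; ring
  have hS2p : 0 < S2 := by rw [hS2]; exact hS2pos
  have hc : (1 : ℝ) ≤ (d : ℝ) + 1 := by
    have := Nat.cast_nonneg (α := ℝ) d
    linarith
  rw [hveq]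
  exact aux_stmt3 (n : ℝ) ((d : ℝ) + 1) S2 xbar hn0 hc hS2p
end

section
/- Let $K_1, \dots, K_m$ be compact convex subsets of $\mathbb{R}^d$ whose union $K = K_1 \cup \dots \cup K_m$ is convex. Then, for each $k = 0, \dots, d$, the intrinsic volume $C_k$ satisfies the inclusion–exclusion formula $C_k(K) = \sum_{\emptyset \ne I \subseteq \{1, \dots, m\}} (-1)^{|I|-1} C_k\big(\bigcap_{i\in I} K_i\big)$, where all intersections $\bigcap_{i\in I}K_i$ are compact convex (possibly empty, with $C_k(\emptyset) = 0$). -/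
open MeasureTheory Metric Finset

attribute [local instance low] Classical.propDecidable

/-- `κ j` is the volume of the unit ball in `ℝ^j`. -/
noncomputable def unitBallVol (j : ℕ) : ℝ :=
  (volume (Metric.ball (0 : EuclideanSpace ℝ (Fin j)) 1)).toReal

lemma oneD {ι : Type*} (s : Finset ι) (α : ι → ℝ) (a b : ι → ℝ)
    (hab : ∀ j ∈ s, a j ≤ b j)
    (h : ∀ t : ℝ, ∑ j ∈ s, α j * (if t ∈ Set.Icc (a j) (b j) then (1:ℝ) else 0) = 0) :
    ∑ j ∈ s, α j = 0 := by
  classical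
  have key : ∀ t : ℝ, ∑ j ∈ s.filter (fun j => b j = t), α j = 0 := by
    intro t
    obtain ⟨δ, hδ0, hδ⟩ : ∃ δ : ℝ, 0 < δ ∧ ∀ u ∈ s.image a ∪ s.image b, t < u → t + δ < u := by
      set D := (s.image a ∪ s.image b).filter (fun u => t < u) with hD
      by_cases hDne : D.Nonempty
      · refine ⟨(D.min' hDne - t)/2, by
          have := (mem_filter.1 (D.min'_mem hDne)).2; linarith, ?_⟩
        intro u hu htu
        have hmin : D.min' hDne ≤ u := D.min'_le u (mem_filter.2 ⟨hu, htu⟩)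
        have := (mem_filter.1 (D.min'_mem hDne)).2
        linarith
      · refine ⟨1, one_pos, ?_⟩
        intro u hu htu
        exact absurd ⟨u, mem_filter.2 ⟨hu, htu⟩⟩ hDne
    have h1 := h t
    have h2 := h (t + δ)
    have hterm : ∀ j ∈ s,
        α j * (if t ∈ Set.Icc (a j) (b j) then (1:ℝ) else 0)
        - α j * (if t + δ ∈ Set.Icc (a j) (b j) then (1:ℝ) else 0)
        = if b j = t then α j else 0 := by
      intro j hj
      by_cases hbj : b j = t
      · have h1 : t ∈ Set.Icc (a j) (b j) := ⟨hbj ▸ hab j hj, le_of_eq hbj.symm⟩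
        have h2 : t + δ ∉ Set.Icc (a j) (b j) := by
          intro hmem
          have := hmem.2
          rw [hbj] at this
          linarith
        rw [if_pos h1, if_neg h2, if_pos hbj]
        ring
      · have heq : (t ∈ Set.Icc (a j) (b j)) ↔ (t + δ ∈ Set.Icc (a j) (b j)) := by
          constructor
          · rintro ⟨hl, hr⟩
            have hbt : t < b j := lt_of_le_of_ne hr (fun e => hbj e.symm)
            have : t + δ < b j := hδ (b j) (mem_union_right _ (mem_image_of_mem b hj)) hbt
            exact ⟨by linarith, le_of_lt this⟩
          · rintro ⟨hl, hr⟩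
            constructor
            · by_contra hta
              push_neg at hta
              have : t + δ < a j := hδ (a j) (mem_union_left _ (mem_image_of_mem a hj)) hta
              linarith
            · linarith
        rw [if_neg hbj]
        by_cases hmem : t ∈ Set.Icc (a j) (b j)
        · rw [if_pos hmem, if_pos (heq.1 hmem)]; ring
        · rw [if_neg hmem, if_neg (fun hc => hmem (heq.2 hc))]; ring
    calc ∑ j ∈ s.filter (fun j => b j = t), α j
        = ∑ j ∈ s, if b j = t then α j else 0 := by rw [sum_filter]
      _ = ∑ j ∈ s, (α j * (if t ∈ Set.Icc (a j) (b j) then (1:ℝ) else 0)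
            - α j * (if t + δ ∈ Set.Icc (a j) (b j) then (1:ℝ) else 0)) :=
          (sum_congr rfl fun j hj => (hterm j hj).symm)
      _ = 0 := by rw [sum_sub_distrib, h1, h2, sub_zero]
  calc ∑ j ∈ s, α j
      = ∑ t ∈ s.image b, ∑ j ∈ s.filter (fun j => b j = t), α j :=
        (sum_fiberwise_of_maps_to (fun j hj => mem_image_of_mem b hj) α).symm
    _ = 0 := by simp [key]

lemma indicatorLinear (d : ℕ) (k : ℕ) :
    ∀ {ι : Type} (s : Finset ι) (K : ι → Set (EuclideanSpace ℝ (Fin d))) (α : ι → ℝ)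
      (c : Fin d → ℝ), k ≤ d →
      (∀ j ∈ s, IsCompact (K j)) → (∀ j ∈ s, Convex ℝ (K j)) →
      (∀ j ∈ s, ∀ x ∈ K j, ∀ i : Fin d, k ≤ (i : ℕ) → x i = c i) →
      (∀ x, ∑ j ∈ s, α j * Set.indicator (K j) (fun _ => (1:ℝ)) x = 0) →
      ∑ j ∈ s, α j * (if (K j).Nonempty then (1:ℝ) else 0) = 0 := by
  induction k with
  | zero =>
    intro ι s K α c _ hKc hKconv hsub hrel
    set cE : EuclideanSpace ℝ (Fin d) := (WithLp.equiv 2 (Fin d → ℝ)).symm c with hcE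
    have hcEi : ∀ i, cE i = c i := fun i => rfl
    have hr := hrel cE
    calc ∑ j ∈ s, α j * (if (K j).Nonempty then (1:ℝ) else 0)
        = ∑ j ∈ s, α j * Set.indicator (K j) (fun _ => (1:ℝ)) cE := by
          refine sum_congr rfl fun j hj => ?_
          congr 1
          by_cases hne : (K j).Nonempty
          · obtain ⟨y, hy⟩ := hne
            have hyE : y = cE := by
              refine PiLp.ext fun i => ?_
              rw [hcEi]
              exact hsub j hj y hy i (Nat.zero_le _)
            rw [if_pos ⟨y, hy⟩, Set.indicator_of_mem (hyE ▸ hy)]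
          · rw [if_neg hne, Set.indicator_of_notMem (fun hc => hne ⟨cE, hc⟩)]
      _ = 0 := hr
  | succ k ih =>
    intro ι s K α c hkd hKc hKconv hsub hrel
    classical
    have hklt : k < d := Nat.lt_of_lt_of_le (Nat.lt_succ_self k) hkd
    set κ : Fin d := ⟨k, hklt⟩ with hκ
    have hκcont : Continuous (fun x : EuclideanSpace ℝ (Fin d) => x κ) :=
      (EuclideanSpace.proj κ).continuous
    have hslice_convex : ∀ t : ℝ, Convex ℝ {x : EuclideanSpace ℝ (Fin d) | x κ = t} := by
      intro t x hx y hy p q hp hq hpq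
      simp only [Set.mem_setOf_eq] at *
      show (p • x + q • y) κ = t
      rw [PiLp.add_apply, PiLp.smul_apply, PiLp.smul_apply, hx, hy]
      simp only [smul_eq_mul]
      rw [← add_mul, hpq, one_mul]
    have hslice_closed : ∀ t : ℝ, IsClosed {x : EuclideanSpace ℝ (Fin d) | x κ = t} := by
      intro t
      exact isClosed_eq hκcont continuous_const
    -- apply IH to slices
    have slices : ∀ t : ℝ, ∑ j ∈ s, α j *
        (if (K j ∩ {x | x κ = t}).Nonempty then (1:ℝ) else 0) = 0 := by
      intro t
      refine ih s (fun j => K j ∩ {x | x κ = t}) α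
        (fun i => if (i : ℕ) = k then t else c i) (le_of_lt hklt)
        (fun j hj => (hKc j hj).inter_right (hslice_closed t))
        (fun j hj => (hKconv j hj).inter (hslice_convex t))
        ?_ ?_
      · intro j hj x hx i hik
        show x i = if (i : ℕ) = k then t else c i
        rcases Nat.eq_or_lt_of_le hik with heq | hlt
        · have hiκ : i = κ := Fin.ext heq.symm
          rw [if_pos heq.symm, hiκ]
          exact hx.2
        · rw [if_neg (by omega)]
          exact hsub j hj x hx.1 i hlt
      · intro x
        by_cases hxt : x κ = t
        · rw [← hrel x]
          refine sum_congr rfl fun j hj => ?_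
          congr 1
          by_cases hxK : x ∈ K j
          · rw [Set.indicator_of_mem (show x ∈ K j ∩ {x | x κ = t} from ⟨hxK, hxt⟩),
              Set.indicator_of_mem hxK]
          · rw [Set.indicator_of_notMem
                (show x ∉ K j ∩ {x | x κ = t} from fun hc => hxK hc.1),
              Set.indicator_of_notMem hxK]
        · refine sum_eq_zero fun j hj => ?_
          rw [Set.indicator_of_notMem (fun hc => hxt hc.2)]
          ring
    -- interval description
    set f : EuclideanSpace ℝ (Fin d) → ℝ := fun x => x κ with hf
    set a : ι → ℝ := fun j => sInf (f '' K j) with ha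
    set b : ι → ℝ := fun j => sSup (f '' K j) with hb
    have hint : ∀ j ∈ s, (K j).Nonempty →
        ∀ t : ℝ, (K j ∩ {x | x κ = t}).Nonempty ↔ t ∈ Set.Icc (a j) (b j) := by
      intro j hj hne t
      have himg_cpt : IsCompact (f '' K j) := (hKc j hj).image hκcont
      have himg_ne : (f '' K j).Nonempty := hne.image f
      have hbdd_a : BddBelow (f '' K j) := himg_cpt.bddBelow
      have hbdd_b : BddAbove (f '' K j) := himg_cpt.bddAbove
      constructor
      · rintro ⟨x, hxK, hxt⟩
        have hmem : t ∈ f '' K j := ⟨x, hxK, hxt⟩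
        exact ⟨csInf_le hbdd_a hmem, le_csSup hbdd_b hmem⟩
      · intro ht
        have hconn : IsPreconnected (f '' K j) :=
          ((hKconv j hj).isPreconnected).image f hκcont.continuousOn
        have hsub' : Set.Icc (a j) (b j) ⊆ f '' K j :=
          hconn.Icc_subset (himg_cpt.sInf_mem himg_ne) (himg_cpt.sSup_mem himg_ne)
        obtain ⟨x, hxK, hxt⟩ := hsub' ht
        exact ⟨x, hxK, hxt⟩
    -- reduce to the nonempty sets
    have hstep : ∀ t : ℝ, ∑ j ∈ s.filter (fun j => (K j).Nonempty),
        α j * (if t ∈ Set.Icc (a j) (b j) then (1:ℝ) else 0) = 0 := by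
      intro t
      calc ∑ j ∈ s.filter (fun j => (K j).Nonempty),
            α j * (if t ∈ Set.Icc (a j) (b j) then (1:ℝ) else 0)
          = ∑ j ∈ s, if (K j).Nonempty then
              α j * (if t ∈ Set.Icc (a j) (b j) then (1:ℝ) else 0) else 0 := sum_filter _ _
        _ = ∑ j ∈ s, α j * (if (K j ∩ {x | x κ = t}).Nonempty then (1:ℝ) else 0) := by
            refine sum_congr rfl fun j hj => ?_
            by_cases hne : (K j).Nonempty
            · rw [if_pos hne]
              congr 1
              by_cases hmem : t ∈ Set.Icc (a j) (b j)
              · rw [if_pos hmem, if_pos ((hint j hj hne t).2 hmem)]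
              · rw [if_neg hmem, if_neg (fun hc => hmem ((hint j hj hne t).1 hc))]
            · rw [if_neg hne]
              have hsl : ¬(K j ∩ {x | x κ = t}).Nonempty := fun ⟨x, hx⟩ => hne ⟨x, hx.1⟩
              rw [if_neg hsl, mul_zero]
        _ = 0 := slices t
    have hfin := oneD (s.filter (fun j => (K j).Nonempty)) α a b
      (fun j hj => by
        have hne := (mem_filter.1 hj).2
        have hjs := (mem_filter.1 hj).1
        have himg_cpt : IsCompact (f '' K j) := (hKc j hjs).image hκcont
        exact csInf_le_csSup (hne.image f) himg_cpt.bddBelow himg_cpt.bddAbove)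
      hstep
    calc ∑ j ∈ s, α j * (if (K j).Nonempty then (1:ℝ) else 0)
        = ∑ j ∈ s, if (K j).Nonempty then α j else 0 := by
          refine sum_congr rfl fun j _ => ?_
          by_cases hne : (K j).Nonempty
          · rw [if_pos hne, if_pos hne, mul_one]
          · rw [if_neg hne, if_neg hne, mul_zero]
      _ = ∑ j ∈ s.filter (fun j => (K j).Nonempty), α j := (sum_filter _ _).symm
      _ = 0 := hfin

lemma euler (d m : ℕ) (C : Fin m → Set (EuclideanSpace ℝ (Fin d)))
    (hc : ∀ i, IsCompact (C i)) (hconv : ∀ i, Convex ℝ (C i))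
    (hU : Convex ℝ (⋃ i, C i)) :
    ∑ I ∈ Finset.univ.powerset.filter (fun I : Finset (Fin m) => I.Nonempty),
      (-1:ℝ)^(I.card - 1) * (if (⋂ i ∈ I, C i).Nonempty then (1:ℝ) else 0)
      = (if (⋃ i, C i).Nonempty then (1:ℝ) else 0) := by
  classical
  set P : Finset (Finset (Fin m)) :=
    Finset.univ.powerset.filter (fun I : Finset (Fin m) => I.Nonempty) with hP
  set KK : Option (Finset (Fin m)) → Set (EuclideanSpace ℝ (Fin d)) :=
    fun o => o.elim (⋃ i, C i) (fun I => ⋂ i ∈ I, C i) with hKK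
  set αα : Option (Finset (Fin m)) → ℝ :=
    fun o => o.elim (-1) (fun I => (-1:ℝ)^(I.card - 1)) with hαα
  set s : Finset (Option (Finset (Fin m))) := insert none (P.image some) with hs
  have hnone : none ∉ P.image some := by simp
  -- pointwise relation
  have hrel : ∀ x, ∑ j ∈ s, αα j * Set.indicator (KK j) (fun _ => (1:ℝ)) x = 0 := by
    intro x
    rw [hs, sum_insert hnone, sum_image (by intro a _ b _ h; exact Option.some_injective _ h)]
    set T : Finset (Fin m) := Finset.univ.filter (fun i => x ∈ C i) with hT
    have hind : ∀ I ∈ P, Set.indicator (KK (some I)) (fun _ => (1:ℝ)) x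
        = if I ⊆ T then 1 else 0 := by
      intro I hI
      have hIne : I.Nonempty := (mem_filter.1 hI).2
      by_cases hsub : I ⊆ T
      · have hx : x ∈ ⋂ i ∈ I, C i := by
          refine Set.mem_biInter fun i hi => ?_
          have := hsub hi
          rw [hT, mem_filter] at this
          exact this.2
        rw [if_pos hsub]
        exact Set.indicator_of_mem hx _
      · have hx : x ∉ ⋂ i ∈ I, C i := by
          intro hx
          refine hsub fun i hi => ?_
          rw [hT, mem_filter]
          exact ⟨mem_univ i, Set.mem_iInter₂.1 hx i hi⟩
        rw [if_neg hsub]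
        exact Set.indicator_of_notMem hx _
    have hindU : Set.indicator (KK none) (fun _ => (1:ℝ)) x
        = if T.Nonempty then 1 else 0 := by
      by_cases hx : x ∈ ⋃ i, C i
      · obtain ⟨i, hi⟩ := Set.mem_iUnion.1 hx
        rw [if_pos ⟨i, by rw [hT, mem_filter]; exact ⟨mem_univ i, hi⟩⟩]
        exact Set.indicator_of_mem hx _
      · have hT0 : ¬ T.Nonempty := by
          rintro ⟨i, hi⟩
          rw [hT, mem_filter] at hi
          exact hx (Set.mem_iUnion.2 ⟨i, hi.2⟩)
        rw [if_neg hT0]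
        exact Set.indicator_of_notMem hx _
    rw [hindU]
    have hsum : ∑ I ∈ P, αα (some I) * (if I ⊆ T then (1:ℝ) else 0)
        = ∑ I ∈ T.powerset.filter (fun I => I.Nonempty), (-1:ℝ)^(I.card - 1) := by
      calc ∑ I ∈ P, αα (some I) * (if I ⊆ T then (1:ℝ) else 0)
          = ∑ I ∈ P, (if I ⊆ T then (-1:ℝ)^(I.card - 1) else 0) := by
            refine sum_congr rfl fun I hI => ?_
            show (-1:ℝ)^(I.card - 1) * _ = _
            by_cases h : I ⊆ T
            · rw [if_pos h, if_pos h, mul_one]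
            · rw [if_neg h, if_neg h, mul_zero]
        _ = ∑ I ∈ P.filter (fun I => I ⊆ T), (-1:ℝ)^(I.card - 1) := (sum_filter _ _).symm
        _ = ∑ I ∈ T.powerset.filter (fun I => I.Nonempty), (-1:ℝ)^(I.card - 1) := by
            refine sum_congr ?_ (fun _ _ => rfl)
            ext I
            simp only [hP, mem_filter, mem_powerset]
            constructor
            · rintro ⟨⟨h1, h2⟩, h3⟩; exact ⟨h3, h2⟩
            · rintro ⟨h1, h2⟩; exact ⟨⟨subset_univ I, h2⟩, h1⟩
    have hpow : ∑ I ∈ T.powerset.filter (fun I => I.Nonempty), (-1:ℝ)^(I.card - 1)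
        = if T.Nonempty then 1 else 0 := by
      by_cases hTne : T.Nonempty
      · rw [if_pos hTne]
        have h0' : (∑ I ∈ T.powerset, (-1:ℤ)^I.card) = 0 := by
          rw [Finset.sum_powerset_neg_one_pow_card]
          exact if_neg (fun h => by rw [h] at hTne; exact not_nonempty_empty hTne)
        have h0 : ∑ I ∈ T.powerset, (-1:ℝ)^I.card = 0 := by
          have := congrArg (fun z : ℤ => (z : ℝ)) h0'
          push_cast at this
          exact this
        have hsplit : ∑ I ∈ T.powerset, (-1:ℝ)^I.card
            = (-1:ℝ)^(0:ℕ) + ∑ I ∈ T.powerset.filter (fun I => I.Nonempty), (-1:ℝ)^I.card := by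
          rw [← Finset.sum_filter_add_sum_filter_not T.powerset (fun I => I.Nonempty)]
          rw [add_comm]
          congr 1
          have : T.powerset.filter (fun I => ¬ I.Nonempty) = {∅} := by
            ext I
            simp only [mem_filter, mem_powerset, mem_singleton,
              Finset.not_nonempty_iff_eq_empty]
            constructor
            · rintro ⟨h1, h2⟩; exact h2
            · rintro rfl; exact ⟨empty_subset T, rfl⟩
          rw [this, sum_singleton, card_empty]
        have hneg : ∑ I ∈ T.powerset.filter (fun I => I.Nonempty), (-1:ℝ)^(I.card - 1)
            = - ∑ I ∈ T.powerset.filter (fun I => I.Nonempty), (-1:ℝ)^I.card := by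
          rw [← sum_neg_distrib]
          refine sum_congr rfl fun I hI => ?_
          have hIne : I.Nonempty := (mem_filter.1 hI).2
          have hcard : I.card = (I.card - 1) + 1 := (Nat.succ_pred_eq_of_pos (card_pos.2 hIne)).symm
          rw [hcard]
          rw [pow_succ]
          ring_nf
          simp
        rw [hneg]
        have : ∑ I ∈ T.powerset.filter (fun I => I.Nonempty), (-1:ℝ)^I.card = -1 := by
          have := hsplit ▸ h0
          simp at this
          linarith
        rw [this]; norm_num
      · rw [if_neg hTne]
        have : T.powerset.filter (fun I => I.Nonempty) = ∅ := by
          ext I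
          simp only [mem_filter, mem_powerset, notMem_empty, iff_false]
          rintro ⟨hsub, hne⟩
          exact hTne (hne.mono hsub)
        rw [this, sum_empty]
    have : ∑ I ∈ P, αα (some I) * Set.indicator (KK (some I)) (fun _ => (1:ℝ)) x
        = if T.Nonempty then 1 else 0 := by
      rw [← hpow, ← hsum]
      exact sum_congr rfl fun I hI => by rw [hind I hI]
    rw [this]
    show (-1) * (if T.Nonempty then (1:ℝ) else 0) + (if T.Nonempty then (1:ℝ) else 0) = 0
    ring
  have hcompact : ∀ j ∈ s, IsCompact (KK j) := by
    rintro (_ | I) hj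
    · exact isCompact_iUnion hc
    · have hI : I ∈ P := by
        rw [hs, mem_insert] at hj
        rcases hj with h | h
        · exact absurd h (by simp)
        · obtain ⟨I', hI', hII⟩ := mem_image.1 h
          rwa [← Option.some_injective _ hII]
      obtain ⟨i₀, hi₀⟩ := (mem_filter.1 hI).2
      exact (hc i₀).of_isClosed_subset
        (isClosed_biInter fun i _ => (hc i).isClosed)
        (Set.biInter_subset_of_mem hi₀)
  have hconvex : ∀ j ∈ s, Convex ℝ (KK j) := by
    rintro (_ | I) hj
    · exact hU
    · exact convex_iInter fun i => convex_iInter fun _ => hconv i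
  have hfinal := indicatorLinear d d s KK αα (fun _ => 0) le_rfl hcompact hconvex
    (fun j hj x hx i hik => absurd hik (by omega)) hrel
  rw [hs, sum_insert hnone, sum_image (by intro a _ b _ h; exact Option.some_injective _ h)]
    at hfinal
  have : ∑ I ∈ P, αα (some I) * (if (KK (some I)).Nonempty then (1:ℝ) else 0)
      = ∑ I ∈ P, (-1:ℝ)^(I.card - 1) * (if (⋂ i ∈ I, C i).Nonempty then (1:ℝ) else 0) := rfl
  rw [this] at hfinal
  have hsimp : αα none * (if (KK none).Nonempty then (1:ℝ) else 0)
      = -(if (⋃ i, C i).Nonempty then (1:ℝ) else 0) := by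
    show (-1) * _ = _
    ring_nf
    rfl
  rw [hsimp] at hfinal
  linarith

-- membership in cthickening of a compact set
lemma mem_cthick_iff {d : ℕ} (A : Set (EuclideanSpace ℝ (Fin d))) (hA : IsCompact A)
    {ε : ℝ} (hε : 0 ≤ ε) (x : EuclideanSpace ℝ (Fin d)) :
    x ∈ Metric.cthickening ε A ↔ (A ∩ Metric.closedBall x ε).Nonempty := by
  rw [hA.cthickening_eq_biUnion_closedBall hε]
  constructor
  · rintro hx
    obtain ⟨y, hy, hxy⟩ := Set.mem_iUnion₂.1 hx
    refine ⟨y, hy, ?_⟩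
    rw [mem_closedBall] at hxy ⊢
    rw [dist_comm]
    exact hxy
  · rintro ⟨y, hyA, hyB⟩
    refine Set.mem_iUnion₂.2 ⟨y, hyA, ?_⟩
    rw [mem_closedBall] at hyB ⊢
    rw [dist_comm]
    exact hyB

lemma volIE (d m : ℕ) (K : Fin m → Set (EuclideanSpace ℝ (Fin d)))
    (hKc : ∀ i, IsCompact (K i)) (hKconv : ∀ i, Convex ℝ (K i))
    (hU : Convex ℝ (⋃ i, K i)) (ε : ℝ) (hε : 0 ≤ ε) :
    (volume (Metric.cthickening ε (⋃ i, K i))).toReal =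
      ∑ I ∈ Finset.univ.powerset.filter (fun I : Finset (Fin m) => I.Nonempty),
        (-1:ℝ)^(I.card - 1) *
          (volume (Metric.cthickening ε (⋂ i ∈ I, K i))).toReal := by
  classical
  set P : Finset (Finset (Fin m)) :=
    Finset.univ.powerset.filter (fun I : Finset (Fin m) => I.Nonempty) with hP
  have hUc : IsCompact (⋃ i, K i) := isCompact_iUnion hKc
  have hIc : ∀ I ∈ P, IsCompact (⋂ i ∈ I, K i) := by
    intro I hI
    obtain ⟨i₀, hi₀⟩ := (mem_filter.1 hI).2
    exact (hKc i₀).of_isClosed_subset (isClosed_biInter fun i _ => (hKc i).isClosed)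
      (Set.biInter_subset_of_mem hi₀)
  -- pointwise identity
  have hpt : ∀ x, Set.indicator (Metric.cthickening ε (⋃ i, K i)) (1 : EuclideanSpace ℝ (Fin d) → ℝ) x
      = ∑ I ∈ P, (-1:ℝ)^(I.card - 1) *
          Set.indicator (Metric.cthickening ε (⋂ i ∈ I, K i)) (1 : EuclideanSpace ℝ (Fin d) → ℝ) x := by
    intro x
    have he := euler d m (fun i => K i ∩ Metric.closedBall x ε)
      (fun i => (hKc i).inter_right isClosed_closedBall)
      (fun i => (hKconv i).inter (convex_closedBall x ε))
      (by rw [← Set.iUnion_inter]; exact hU.inter (convex_closedBall x ε))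
    have hUiff : (⋃ i, K i ∩ Metric.closedBall x ε).Nonempty ↔
        x ∈ Metric.cthickening ε (⋃ i, K i) := by
      rw [mem_cthick_iff _ hUc hε, Set.iUnion_inter]
    have hIiff : ∀ I ∈ P, (⋂ i ∈ I, K i ∩ Metric.closedBall x ε).Nonempty ↔
        x ∈ Metric.cthickening ε (⋂ i ∈ I, K i) := by
      intro I hI
      obtain ⟨i₀, hi₀⟩ := (mem_filter.1 hI).2
      have hbi : (⋂ i ∈ I, K i ∩ Metric.closedBall x ε)
          = (⋂ i ∈ I, K i) ∩ Metric.closedBall x ε := by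
        ext y
        simp only [Set.mem_iInter, Set.mem_inter_iff]
        constructor
        · intro h
          exact ⟨fun i hi => (h i hi).1, (h i₀ hi₀).2⟩
        · rintro ⟨h1, h2⟩ i hi
          exact ⟨h1 i hi, h2⟩
      rw [hbi, mem_cthick_iff _ (hIc I hI) hε]
    calc Set.indicator (Metric.cthickening ε (⋃ i, K i)) (1 : EuclideanSpace ℝ (Fin d) → ℝ) x
        = (if (⋃ i, K i ∩ Metric.closedBall x ε).Nonempty then (1:ℝ) else 0) := by
          rw [Set.indicator_apply]
          exact if_congr hUiff.symm rfl rfl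
      _ = ∑ I ∈ P, (-1:ℝ)^(I.card - 1) *
            (if (⋂ i ∈ I, K i ∩ Metric.closedBall x ε).Nonempty then (1:ℝ) else 0) :=
          he.symm
      _ = ∑ I ∈ P, (-1:ℝ)^(I.card - 1) *
            Set.indicator (Metric.cthickening ε (⋂ i ∈ I, K i))
              (1 : EuclideanSpace ℝ (Fin d) → ℝ) x := by
          refine sum_congr rfl fun I hI => ?_
          congr 1
          rw [Set.indicator_apply]
          exact if_congr (hIiff I hI) rfl rfl
  -- integrate
  have hmeas : ∀ A : Set (EuclideanSpace ℝ (Fin d)), IsCompact A →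
      MeasurableSet (Metric.cthickening ε A) ∧
        volume (Metric.cthickening ε A) < ⊤ := by
    intro A hA
    refine ⟨(Metric.isClosed_cthickening).measurableSet, ?_⟩
    exact (isCompact_of_isClosed_isBounded Metric.isClosed_cthickening
      (hA.isBounded.cthickening)).measure_lt_top
  have hint : ∀ A : Set (EuclideanSpace ℝ (Fin d)), IsCompact A →
      Integrable (Set.indicator (Metric.cthickening ε A) (1 : EuclideanSpace ℝ (Fin d) → ℝ)) volume := by
    intro A hA
    rw [integrable_indicator_iff (hmeas A hA).1]
    exact integrableOn_const (hmeas A hA).2.ne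
  calc (volume (Metric.cthickening ε (⋃ i, K i))).toReal
      = ∫ x, Set.indicator (Metric.cthickening ε (⋃ i, K i)) (1 : EuclideanSpace ℝ (Fin d) → ℝ) x :=
        (integral_indicator_one (hmeas _ hUc).1).symm
    _ = ∫ x, ∑ I ∈ P, (-1:ℝ)^(I.card - 1) *
          Set.indicator (Metric.cthickening ε (⋂ i ∈ I, K i)) (1 : EuclideanSpace ℝ (Fin d) → ℝ) x := by
        congr 1
        funext x
        exact hpt x
    _ = ∑ I ∈ P, ∫ x, (-1:ℝ)^(I.card - 1) *
          Set.indicator (Metric.cthickening ε (⋂ i ∈ I, K i)) (1 : EuclideanSpace ℝ (Fin d) → ℝ) x := by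
        refine integral_finset_sum P fun I hI => ?_
        exact (hint _ (hIc I hI)).const_mul _
    _ = ∑ I ∈ P, (-1:ℝ)^(I.card - 1) *
          (volume (Metric.cthickening ε (⋂ i ∈ I, K i))).toReal := by
        refine sum_congr rfl fun I hI => ?_
        rw [integral_const_mul, integral_indicator_one (hmeas _ (hIc I hI)).1, measureReal_def]

lemma unitBallVol_pos (j : ℕ) : 0 < unitBallVol j := by
  unfold unitBallVol
  refine ENNReal.toReal_pos ?_ ?_
  · exact (measure_ball_pos volume (0 : EuclideanSpace ℝ (Fin j)) one_pos).ne'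
  · exact measure_ball_lt_top.ne

lemma polyCoeff (n : ℕ) (c : ℕ → ℝ)
    (h : ∀ ε : ℝ, 0 ≤ ε → ∑ j ∈ Finset.range n, c j * ε ^ j = 0) :
    ∀ j < n, c j = 0 := by
  intro j hj
  set p : Polynomial ℝ := ∑ i ∈ Finset.range n, Polynomial.C (c i) * Polynomial.X ^ i with hp
  have heval : ∀ ε : ℝ, 0 ≤ ε → p.eval ε = 0 := by
    intro ε hε
    rw [hp, Polynomial.eval_finset_sum]
    simpa using h ε hε
  have hzero : p = 0 := by
    refine Polynomial.eq_zero_of_infinite_isRoot p ?_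
    refine Set.Infinite.mono ?_ (Set.Ici_infinite (0:ℝ))
    intro x hx
    exact heval x hx
  have := congrArg (fun q => Polynomial.coeff q j) hzero
  simp only [Polynomial.coeff_zero] at this
  rw [hp, Polynomial.finset_sum_coeff] at this
  rw [← this]
  symm
  have : ∀ i ∈ Finset.range n, (Polynomial.C (c i) * Polynomial.X ^ i).coeff j
      = if i = j then c i else 0 := by
    intro i _
    rw [Polynomial.coeff_C_mul, Polynomial.coeff_X_pow]
    by_cases hij : i = j
    · rw [if_pos hij, if_pos (by omega), mul_one]
    · rw [if_neg (by omega), if_neg hij, mul_zero]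
  rw [Finset.sum_congr rfl this, Finset.sum_ite_eq' (Finset.range n) j c,
    if_pos (Finset.mem_range.2 hj)]

theorem stmt_16 (d m : ℕ) (hm : 0 < m)
    (K : Fin m → Set (EuclideanSpace ℝ (Fin d)))
    (hKc : ∀ i, IsCompact (K i)) (hKconv : ∀ i, Convex ℝ (K i))
    (hU : Convex ℝ (⋃ i, K i))
    (C : ℕ → Set (EuclideanSpace ℝ (Fin d)) → ℝ)
    (hCempty : ∀ k, C k ∅ = 0)
    (hSteiner : ∀ A : Set (EuclideanSpace ℝ (Fin d)), IsCompact A → Convex ℝ A →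
      A.Nonempty → ∀ ε : ℝ, 0 ≤ ε →
        (volume (Metric.cthickening ε A)).toReal =
          ∑ k ∈ Finset.range (d + 1), ε ^ (d - k) * unitBallVol (d - k) * C k A) :
    ∀ k ≤ d, C k (⋃ i, K i) =
      ∑ I ∈ Finset.univ.powerset.filter (fun I : Finset (Fin m) => I.Nonempty),
        (-1 : ℝ) ^ (I.card - 1) * C k (⋂ i ∈ I, K i) := by
  classical
  intro k hk
  set P : Finset (Finset (Fin m)) :=
    Finset.univ.powerset.filter (fun I : Finset (Fin m) => I.Nonempty) with hP
  by_cases hUne : (⋃ i, K i).Nonempty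
  · -- main case
    have hUc : IsCompact (⋃ i, K i) := isCompact_iUnion hKc
    have hIc : ∀ I ∈ P, IsCompact (⋂ i ∈ I, K i) := by
      intro I hI
      obtain ⟨i₀, hi₀⟩ := (mem_filter.1 hI).2
      exact (hKc i₀).of_isClosed_subset (isClosed_biInter fun i _ => (hKc i).isClosed)
        (Set.biInter_subset_of_mem hi₀)
    have hIconv : ∀ I ∈ P, Convex ℝ (⋂ i ∈ I, K i) :=
      fun I _ => convex_iInter fun i => convex_iInter fun _ => hKconv i
    set a : ℕ → ℝ := fun k' => C k' (⋃ i, K i)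
      - ∑ I ∈ P, (-1:ℝ)^(I.card - 1) * C k' (⋂ i ∈ I, K i) with ha
    have key : ∀ ε : ℝ, 0 ≤ ε →
        ∑ k' ∈ Finset.range (d + 1),
          ε ^ (d - k') * unitBallVol (d - k') * a k' = 0 := by
      intro ε hε
      have hIvol : ∀ I ∈ P, (volume (Metric.cthickening ε (⋂ i ∈ I, K i))).toReal
          = ∑ k' ∈ Finset.range (d + 1),
              ε ^ (d - k') * unitBallVol (d - k') * C k' (⋂ i ∈ I, K i) := by
        intro I hI
        by_cases hne : (⋂ i ∈ I, K i).Nonempty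
        · exact hSteiner _ (hIc I hI) (hIconv I hI) hne ε hε
        · have hempty : (⋂ i ∈ I, K i) = ∅ := Set.not_nonempty_iff_eq_empty.1 hne
          rw [hempty, Metric.cthickening_empty, measure_empty]
          simp only [ENNReal.toReal_zero]
          symm
          refine Finset.sum_eq_zero fun k' _ => ?_
          rw [hCempty k', mul_zero]
      have h1 : ∑ k' ∈ Finset.range (d + 1),
          ε ^ (d - k') * unitBallVol (d - k') * C k' (⋃ i, K i)
          = ∑ I ∈ P, (-1:ℝ)^(I.card - 1) * ∑ k' ∈ Finset.range (d + 1),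
              ε ^ (d - k') * unitBallVol (d - k') * C k' (⋂ i ∈ I, K i) := by
        rw [← hSteiner _ hUc hU hUne ε hε]
        rw [volIE d m K hKc hKconv hU ε hε]
        exact Finset.sum_congr rfl fun I hI => by rw [hIvol I hI]
      have h2 : ∑ I ∈ P, (-1:ℝ)^(I.card - 1) * ∑ k' ∈ Finset.range (d + 1),
            ε ^ (d - k') * unitBallVol (d - k') * C k' (⋂ i ∈ I, K i)
          = ∑ k' ∈ Finset.range (d + 1), ε ^ (d - k') * unitBallVol (d - k') *
              ∑ I ∈ P, (-1:ℝ)^(I.card - 1) * C k' (⋂ i ∈ I, K i) := by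
        calc ∑ I ∈ P, (-1:ℝ)^(I.card - 1) * ∑ k' ∈ Finset.range (d + 1),
              ε ^ (d - k') * unitBallVol (d - k') * C k' (⋂ i ∈ I, K i)
            = ∑ I ∈ P, ∑ k' ∈ Finset.range (d + 1), (-1:ℝ)^(I.card - 1) *
                (ε ^ (d - k') * unitBallVol (d - k') * C k' (⋂ i ∈ I, K i)) :=
              Finset.sum_congr rfl fun I _ => Finset.mul_sum _ _ _
          _ = ∑ k' ∈ Finset.range (d + 1), ∑ I ∈ P, (-1:ℝ)^(I.card - 1) *
                (ε ^ (d - k') * unitBallVol (d - k') * C k' (⋂ i ∈ I, K i)) :=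
              Finset.sum_comm
          _ = ∑ k' ∈ Finset.range (d + 1), ε ^ (d - k') * unitBallVol (d - k') *
                ∑ I ∈ P, (-1:ℝ)^(I.card - 1) * C k' (⋂ i ∈ I, K i) := by
              refine Finset.sum_congr rfl fun k' _ => ?_
              rw [Finset.mul_sum]
              exact Finset.sum_congr rfl fun I _ => by ring
      have h3 : ∑ k' ∈ Finset.range (d + 1),
            ε ^ (d - k') * unitBallVol (d - k') * a k'
          = (∑ k' ∈ Finset.range (d + 1),
              ε ^ (d - k') * unitBallVol (d - k') * C k' (⋃ i, K i))
            - ∑ k' ∈ Finset.range (d + 1), ε ^ (d - k') * unitBallVol (d - k') *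
                ∑ I ∈ P, (-1:ℝ)^(I.card - 1) * C k' (⋂ i ∈ I, K i) := by
        rw [← Finset.sum_sub_distrib]
        refine Finset.sum_congr rfl fun k' _ => ?_
        simp only [ha]
        ring
      rw [h3, h1, h2, sub_self]
    have key2 : ∀ ε : ℝ, 0 ≤ ε →
        ∑ j ∈ Finset.range (d + 1), (unitBallVol j * a (d - j)) * ε ^ j = 0 := by
      intro ε hε
      have hr := Finset.sum_range_reflect
        (fun k' => ε ^ (d - k') * unitBallVol (d - k') * a k') (d + 1)
      rw [key ε hε] at hr
      rw [← hr]
      refine Finset.sum_congr rfl fun j hj => ?_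
      have hjd : j ≤ d := Nat.lt_succ_iff.1 (Finset.mem_range.1 hj)
      show (unitBallVol j * a (d - j)) * ε ^ j
          = ε ^ (d - (d + 1 - 1 - j)) * unitBallVol (d - (d + 1 - 1 - j)) * a (d + 1 - 1 - j)
      have e1 : d + 1 - 1 - j = d - j := by omega
      have e2 : d - (d - j) = j := Nat.sub_sub_self hjd
      rw [e1, e2]
      ring
    have hcoeff := polyCoeff (d + 1) (fun j => unitBallVol j * a (d - j)) key2
    have hdk : d - k < d + 1 := by omega
    have h0 := hcoeff (d - k) hdk
    have ha0 : a (d - (d - k)) = 0 := by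
      rcases mul_eq_zero.1 h0 with h | h
      · exact absurd h (unitBallVol_pos (d - k)).ne'
      · exact h
    rw [Nat.sub_sub_self hk] at ha0
    have : C k (⋃ i, K i) - ∑ I ∈ P, (-1:ℝ)^(I.card - 1) * C k (⋂ i ∈ I, K i) = 0 := ha0
    linarith
  · -- degenerate case : union empty
    have hempty : (⋃ i, K i) = ∅ := Set.not_nonempty_iff_eq_empty.1 hUne
    rw [hempty, hCempty]
    symm
    refine Finset.sum_eq_zero fun I hI => ?_
    obtain ⟨i₀, hi₀⟩ := (mem_filter.1 hI).2
    have : (⋂ i ∈ I, K i) = ∅ := by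
      refine Set.eq_empty_of_subset_empty ?_
      refine (Set.biInter_subset_of_mem hi₀).trans ?_
      rw [← hempty]
      exact Set.subset_iUnion K i₀
    rw [this, hCempty, mul_zero]
end
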